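/- Fix n ≥ 1 and let σ₁ = [[1,0],[0,-1]], σ₂ = [[0,1],[1,0]], σ₃ = [[0,i],[-i,0]] be the Pauli matrices in M₂(ℂ). In M_{2ⁿ}(ℂ), identified with the n-fold Kronecker product M₂(ℂ) ⊗ ⋯ ⊗ M₂(ℂ), define for 0 ≤ l ≤ n−1 the elements s_{2l+1} := σ₃^{⊗l} ⊗ σ₁ ⊗ I₂^{⊗(n−l−1)} and s_{2l+2} := σ₃^{⊗l} ⊗ σ₂ ⊗ I₂^{⊗(n−l−1)}. Let T be the smallest complex linear subspace of M_{2ⁿ}(ℂ) containing {I, s₁, …, s_{2n−1}} and closed under (x,y,z) ↦ x y* z. Then there is a complex-linear bijection Φ : T → M_{2^{n−1}}(ℂ) × M_{2^{n−1}}(ℂ) satisfying Φ(x y* z) = Φ(x) Φ(y)* Φ(z), where on the product the ternary operation and adjoint are taken componentwise (i.e. T is TRO-isomorphic to M_{2^{n−1}}(ℂ) ⊕ M_{2^{n−1}}(ℂ)). -/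

import Mathlib

noncomputable section

open Matrix

/-- The Pauli matrix `σ₁`. -/
def pauli1 : Matrix (Fin 2) (Fin 2) ℂ := !![1, 0; 0, -1]

/-- The Pauli matrix `σ₂`. -/
def pauli2 : Matrix (Fin 2) (Fin 2) ℂ := !![0, 1; 1, 0]

/-- The Pauli matrix `σ₃`. -/
def pauli3 : Matrix (Fin 2) (Fin 2) ℂ := !![0, Complex.I; -Complex.I, 0]

/-- The `n`-fold Kronecker product of a family of `2 × 2` matrices, realized on the
index set `Fin n → Fin 2` (identifying `M_{2ⁿ}(ℂ)` with `M₂(ℂ) ⊗ ⋯ ⊗ M₂(ℂ)`). -/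
def kron {n : ℕ} (M : Fin n → Matrix (Fin 2) (Fin 2) ℂ) :
    Matrix (Fin n → Fin 2) (Fin n → Fin 2) ℂ :=
  Matrix.of fun f g => ∏ i, M i (f i) (g i)

/-- The element `s_{2l+1} = σ₃^{⊗l} ⊗ σ₁ ⊗ I^{⊗(n-l-1)}` (for `b = false`), resp.
`s_{2l+2} = σ₃^{⊗l} ⊗ σ₂ ⊗ I^{⊗(n-l-1)}` (for `b = true`) of the standard spin system. -/
def spinS (n : ℕ) (l : Fin n) (b : Bool) : Matrix (Fin n → Fin 2) (Fin n → Fin 2) ℂ :=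
  kron fun i => if i < l then pauli3 else if i = l then (if b then pauli2 else pauli1) else 1

/-- The smallest complex linear subspace containing `S` and closed under the ternary
product `(x,y,z) ↦ x y* z`. -/
def troSpanA {A : Type*} [NonUnitalRing A] [StarRing A] [Module ℂ A] (S : Set A) :
    Submodule ℂ A :=
  sInf {W : Submodule ℂ A | S ⊆ W ∧ ∀ x ∈ W, ∀ y ∈ W, ∀ z ∈ W, x * star y * z ∈ W}

/-- The TRO generated by the identity together with the elements `s_j`, `1 ≤ j ≤ N`,
of the standard spin system (`s_{2l+1} = spinS n l false`, `s_{2l+2} = spinS n l true`). -/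
def spinTRO (n N : ℕ) : Submodule ℂ (Matrix (Fin n → Fin 2) (Fin n → Fin 2) ℂ) :=
  troSpanA (insert 1 ((fun p : Fin n × Bool => spinS n p.1 p.2) ''
    {p : Fin n × Bool | 2 * (p.1 : ℕ) + (if p.2 then 2 else 1) ≤ N}))

namespace SpinAux

abbrev M2 := Matrix (Fin 2) (Fin 2) ℂ
abbrev Mat (n : ℕ) := Matrix (Fin n → Fin 2) (Fin n → Fin 2) ℂ

lemma kron_mul {n : ℕ} (M N : Fin n → M2) :
    kron M * kron N = kron (fun i => M i * N i) := by
  ext f g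
  simp only [kron, Matrix.mul_apply, Matrix.of_apply, ← Finset.prod_mul_distrib]
  rw [Finset.prod_univ_sum (fun _ => Finset.univ) (fun i c => M i (f i) c * N i c (g i)),
    Fintype.piFinset_univ]

lemma kron_one {n : ℕ} : kron (fun _ : Fin n => (1 : M2)) = 1 := by
  ext f g
  simp only [kron, of_apply, Matrix.one_apply]
  by_cases h : f = g
  · subst h; simp
  · rw [if_neg h]
    obtain ⟨i, hi⟩ := Function.ne_iff.mp h
    exact Finset.prod_eq_zero (Finset.mem_univ i) (if_neg hi)

def site {n : ℕ} (l : Fin n) (P : M2) : Mat n := kron (fun i => if i = l then P else 1)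

lemma site_apply {n : ℕ} (l : Fin n) (P : M2) (f g : Fin n → Fin 2) :
    site l P f g = P (f l) (g l) * ∏ i ∈ ({l}ᶜ : Finset (Fin n)), (1 : M2) (f i) (g i) := by
  simp only [site, kron, of_apply]
  rw [Fintype.prod_eq_mul_prod_compl l]
  simp only [if_pos rfl]
  congr 1
  refine Finset.prod_congr rfl fun i hi => ?_
  rw [if_neg (Finset.notMem_singleton.mp (Finset.mem_compl.mp hi))]

lemma site_add {n : ℕ} (l : Fin n) (P Q : M2) :
    site l (P + Q) = site l P + site l Q := by
  ext f g; simp [site_apply, Matrix.add_apply, add_mul]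

lemma site_smul {n : ℕ} (l : Fin n) (c : ℂ) (P : M2) :
    site l (c • P) = c • site l P := by
  ext f g; simp [site_apply, Matrix.smul_apply, mul_assoc]

lemma site_one {n : ℕ} (l : Fin n) : site l (1 : M2) = 1 := by
  have : (fun i : Fin n => if i = l then (1 : M2) else 1) = fun _ => 1 := by
    funext i; split <;> rfl
  rw [site, this, kron_one]

lemma pauli3_mul_pauli3 : pauli3 * pauli3 = 1 := by
  ext i j
  fin_cases i <;> fin_cases j <;>
    simp [pauli3, Matrix.mul_apply, Fin.sum_univ_two, Matrix.one_apply, Complex.I_mul_I] <;> ring_nf <;>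
    simp [Complex.I_sq]

lemma pauli1_mul_pauli2 : pauli1 * pauli2 = (-Complex.I) • pauli3 := by
  ext i j
  fin_cases i <;> fin_cases j <;>
    simp [pauli1, pauli2, pauli3, Matrix.mul_apply, Fin.sum_univ_two] <;> ring_nf <;>
    simp [Complex.I_sq]

lemma std00 : Matrix.single (0 : Fin 2) 0 (1:ℂ) = (2⁻¹ : ℂ) • (1 + pauli1) := by
  ext i j
  fin_cases i <;> fin_cases j <;>
    simp [Matrix.single, pauli1, Matrix.one_apply] <;> norm_num

lemma std11 : Matrix.single (1 : Fin 2) 1 (1:ℂ) = (2⁻¹ : ℂ) • (1 - pauli1) := by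
  ext i j
  fin_cases i <;> fin_cases j <;>
    simp [Matrix.single, pauli1, Matrix.one_apply] <;> norm_num

lemma std10 : Matrix.single (1 : Fin 2) 0 (1:ℂ) = (2⁻¹ : ℂ) • (pauli2 + Complex.I • pauli3) := by
  ext i j
  fin_cases i <;> fin_cases j <;>
    simp [Matrix.single, pauli2, pauli3, Complex.I_mul_I] <;> norm_num

lemma std01 : Matrix.single (0 : Fin 2) 1 (1:ℂ) = (2⁻¹ : ℂ) • (pauli2 - Complex.I • pauli3) := by
  ext i j
  fin_cases i <;> fin_cases j <;>
    simp [Matrix.single, pauli2, pauli3, Complex.I_mul_I] <;> norm_num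

end SpinAux

namespace SpinAux2
open SpinAux

lemma troSpanA_subset {A : Type*} [NonUnitalRing A] [StarRing A] [Module ℂ A] (S : Set A) :
    S ⊆ (troSpanA S : Set A) := fun x hx =>
  Submodule.mem_sInf.mpr fun _ hW => hW.1 hx

lemma troSpanA_ternary {A : Type*} [NonUnitalRing A] [StarRing A] [Module ℂ A] {S : Set A}
    {x y z : A} (hx : x ∈ troSpanA S) (hy : y ∈ troSpanA S) (hz : z ∈ troSpanA S) :
    x * star y * z ∈ troSpanA S :=
  Submodule.mem_sInf.mpr fun W hW => hW.2 x (Submodule.mem_sInf.mp hx W hW) y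
    (Submodule.mem_sInf.mp hy W hW) z (Submodule.mem_sInf.mp hz W hW)

lemma troSpanA_le {A : Type*} [NonUnitalRing A] [StarRing A] [Module ℂ A] {S : Set A}
    {W : Submodule ℂ A} (h1 : S ⊆ W) (h2 : ∀ x ∈ W, ∀ y ∈ W, ∀ z ∈ W, x * star y * z ∈ W) :
    troSpanA S ≤ W := sInf_le ⟨h1, h2⟩

abbrev T (m : ℕ) : Submodule ℂ (Mat (m+1)) := spinTRO (m+1) (2*m+1)

lemma one_mem_T (m : ℕ) : (1 : Mat (m+1)) ∈ T m :=
  troSpanA_subset _ (Set.mem_insert _ _)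

lemma gen_mem {m : ℕ} (l : Fin (m+1)) (b : Bool)
    (h : 2 * (l : ℕ) + (if b then 2 else 1) ≤ 2*m+1) : spinS (m+1) l b ∈ T m :=
  troSpanA_subset _ (Set.mem_insert_of_mem _ ⟨(l, b), h, rfl⟩)

lemma mul_mem_T {m : ℕ} {x z : Mat (m+1)} (hx : x ∈ T m) (hz : z ∈ T m) : x * z ∈ T m := by
  have := troSpanA_ternary hx (one_mem_T m) hz
  simp only [star_one, mul_one] at this
  exact this

-- products of generators
lemma mul_spin_site3 {n : ℕ} (l : Fin n) :
    site l pauli3 = Complex.I • (spinS n l false * spinS n l true) := by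
  rw [spinS, spinS, kron_mul]
  have h : (fun i : Fin n => (if i < l then pauli3 else if i = l then (if (false : Bool) then pauli2 else pauli1) else 1) *
      (if i < l then pauli3 else if i = l then (if (true : Bool) then pauli2 else pauli1) else 1)) =
      (fun i : Fin n => if i = l then (((-Complex.I) • pauli3 : M2)) else 1) := by
    funext i
    rcases lt_trichotomy i l with h | h | h
    · rw [if_pos h, if_pos h, if_neg (ne_of_lt h), pauli3_mul_pauli3]
    · subst h
      simp only [lt_irrefl, if_false, if_pos rfl]
      simpa using pauli1_mul_pauli2
    · rw [if_neg (not_lt_of_gt h), if_neg (ne_of_gt h), if_neg (not_lt_of_gt h),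
        if_neg (ne_of_gt h), one_mul, if_neg (ne_of_gt h)]
  rw [h]
  rw [show kron (fun i : Fin n => if i = l then ((-Complex.I) • pauli3 : M2) else 1) =
    site l ((-Complex.I) • pauli3) from rfl]
  rw [site_smul, smul_smul]
  simp [Complex.I_mul_I]

lemma partial_succ {n : ℕ} (u : Fin n → M2) (k : Fin n) :
    kron (fun i => if (i : ℕ) < (k : ℕ) + 1 then u i else 1) =
      kron (fun i => if (i : ℕ) < (k : ℕ) then u i else 1) * site k (u k) := by
  rw [site, kron_mul]
  have h : (fun i : Fin n => (if (i : ℕ) < (k : ℕ) then u i else 1) * (if i = k then u k else 1)) =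
      (fun i : Fin n => if (i : ℕ) < (k : ℕ) + 1 then u i else 1) := by
    funext i
    by_cases h2 : i = k
    · subst h2
      rw [if_neg (lt_irrefl ((i : ℕ))), one_mul, if_pos rfl, if_pos (Nat.lt_succ_self _)]
    · rw [if_neg h2, mul_one]
      have h2' : (i : ℕ) ≠ (k : ℕ) := fun h => h2 (Fin.ext h)
      by_cases h1 : (i : ℕ) < (k : ℕ)
      · rw [if_pos h1, if_pos (by omega)]
      · rw [if_neg h1, if_neg (by omega)]
  rw [h]

def str (n k : ℕ) : Mat n := kron (fun i => if (i : ℕ) < k then pauli3 else 1)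

lemma str_zero (n : ℕ) : str n 0 = 1 := by
  rw [str, show (fun i : Fin n => if (i:ℕ) < 0 then pauli3 else 1) = fun _ => (1 : M2) by
    funext i; simp, kron_one]

lemma str_succ {n : ℕ} (k : Fin n) :
    str n ((k : ℕ) + 1) = str n (k : ℕ) * site k pauli3 :=
  partial_succ (fun _ => pauli3) k

lemma str_mul_spin {n : ℕ} (l : Fin n) (b : Bool) :
    str n (l : ℕ) * spinS n l b = site l (if b then pauli2 else pauli1) := by
  rw [str, spinS, site, kron_mul]
  have h : (fun i : Fin n => (if (i : ℕ) < (l : ℕ) then pauli3 else 1) *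
      (if i < l then pauli3 else if i = l then (if b then pauli2 else pauli1) else 1)) =
      (fun i : Fin n => if i = l then (if b then pauli2 else pauli1) else 1) := by
    funext i
    by_cases h2 : i = l
    · subst h2
      rw [if_neg (lt_irrefl ((i : ℕ))), one_mul, if_neg (lt_irrefl i), if_pos rfl]
    · by_cases h1 : i < l
      · rw [if_pos (Fin.lt_def.mp h1), if_pos h1, pauli3_mul_pauli3, if_neg h2]
      · have h1' : ¬ (i : ℕ) < (l : ℕ) := fun h => h1 (Fin.lt_def.mpr h)
        rw [if_neg h1', if_neg h1, if_neg h2, one_mul]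
  rw [h]

lemma site3_mem {m : ℕ} (l : Fin (m+1)) (h : (l : ℕ) < m) : site l pauli3 ∈ T m := by
  rw [mul_spin_site3]
  exact Submodule.smul_mem _ _ (mul_mem_T (gen_mem l false (by simp; omega))
    (gen_mem l true (by simp; omega)))

lemma str_mem {m : ℕ} (k : ℕ) (h : k ≤ m) : str (m+1) k ∈ T m := by
  induction k with
  | zero => rw [str_zero]; exact one_mem_T m
  | succ k ih =>
    have hk : k < m + 1 := by omega
    have : str (m+1) (k+1) = str (m+1) k * site (⟨k, hk⟩ : Fin (m+1)) pauli3 :=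
      str_succ (⟨k, hk⟩ : Fin (m+1))
    rw [this]
    exact mul_mem_T (ih (by omega)) (site3_mem _ (by simpa using by omega))

lemma site1_mem {m : ℕ} (l : Fin (m+1)) : site l pauli1 ∈ T m := by
  have h := mul_mem_T (str_mem (l : ℕ) (by omega)) (gen_mem l false (by simp; omega))
  rwa [str_mul_spin, if_neg (by simp)] at h

lemma site2_mem {m : ℕ} (l : Fin (m+1)) (h : (l : ℕ) < m) : site l pauli2 ∈ T m := by
  have h2 := mul_mem_T (str_mem (l : ℕ) (by omega)) (gen_mem l true (by simp; omega))
  rwa [str_mul_spin, if_pos rfl] at h2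

end SpinAux2

namespace SpinAux3
open SpinAux SpinAux2

lemma partial_succ' {n : ℕ} (u : Fin n → M2) (k : ℕ) (hk : k < n) :
    kron (fun i => if (i : ℕ) < k + 1 then u i else 1) =
      kron (fun i => if (i : ℕ) < k then u i else 1) * site ⟨k, hk⟩ (u ⟨k, hk⟩) :=
  partial_succ u ⟨k, hk⟩

lemma site_sub {n : ℕ} (l : Fin n) (P Q : M2) :
    site l (P - Q) = site l P - site l Q := by
  ext f g; simp [site_apply, Matrix.sub_apply, sub_mul]

lemma site_std_mem {m : ℕ} (l : Fin (m+1)) (a b : Fin 2)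
    (h : (l : ℕ) < m ∨ a = b) : site l (Matrix.single a b (1:ℂ)) ∈ T m := by
  fin_cases a <;> fin_cases b <;> simp only [Fin.zero_eta, Fin.mk_one] at h ⊢
  · rw [std00, site_smul, site_add, site_one]
    exact Submodule.smul_mem _ _ (Submodule.add_mem _ (one_mem_T m) (site1_mem l))
  · have hl : (l : ℕ) < m := h.resolve_right (by decide)
    rw [std01, site_smul, site_sub, site_smul]
    exact Submodule.smul_mem _ _ (Submodule.sub_mem _ (site2_mem l hl)
      (Submodule.smul_mem _ _ (site3_mem l hl)))
  · have hl : (l : ℕ) < m := h.resolve_right (by decide)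
    rw [std10, site_smul, site_add, site_smul]
    exact Submodule.smul_mem _ _ (Submodule.add_mem _ (site2_mem l hl)
      (Submodule.smul_mem _ _ (site3_mem l hl)))
  · rw [std11, site_smul, site_sub, site_one]
    exact Submodule.smul_mem _ _ (Submodule.sub_mem _ (one_mem_T m) (site1_mem l))

lemma kron_std {n : ℕ} (f g : Fin n → Fin 2) :
    Matrix.single f g (1:ℂ) = kron (fun i => Matrix.single (f i) (g i) (1:ℂ)) := by
  ext f' g'
  simp only [kron, of_apply, Matrix.single, of_apply]
  by_cases h : f = f' ∧ g = g'
  · obtain ⟨rfl, rfl⟩ := h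
    simp
  · rw [if_neg h]
    symm
    rcases not_and_or.mp h with hf | hg
    · obtain ⟨i, hi⟩ := Function.ne_iff.mp hf
      exact Finset.prod_eq_zero (Finset.mem_univ i)
        (if_neg (fun hc : f i = f' i ∧ g i = g' i => hi hc.1))
    · obtain ⟨i, hi⟩ := Function.ne_iff.mp hg
      exact Finset.prod_eq_zero (Finset.mem_univ i)
        (if_neg (fun hc : f i = f' i ∧ g i = g' i => hi hc.2))

lemma unit_mem {m : ℕ} (f g : Fin (m+1) → Fin 2)
    (hfg : f (Fin.last m) = g (Fin.last m)) : Matrix.single f g (1:ℂ) ∈ T m := by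
  have key : ∀ k : ℕ, k ≤ m + 1 →
      kron (fun i => if (i : ℕ) < k then Matrix.single (f i) (g i) (1:ℂ) else 1) ∈ T m := by
    intro k
    induction k with
    | zero =>
      intro _
      have hc : (fun i : Fin (m+1) => if (i : ℕ) < 0 then Matrix.single (f i) (g i) (1:ℂ) else 1)
          = fun _ => (1 : M2) := by funext i; simp
      rw [hc, kron_one]; exact one_mem_T m
    | succ k ih =>
      intro hk
      have hk' : k < m + 1 := by omega
      rw [partial_succ' (fun i => Matrix.single (f i) (g i) (1:ℂ)) k hk']
      refine mul_mem_T (ih (by omega)) (site_std_mem _ _ _ ?_)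
      by_cases hkm : k < m
      · exact Or.inl hkm
      · right
        have : (⟨k, hk'⟩ : Fin (m+1)) = Fin.last m := by
          apply Fin.ext; simp [Fin.last]; omega
        rw [this]; exact hfg
  have h1 := key (m+1) le_rfl
  have hc : (fun i : Fin (m+1) => if (i : ℕ) < m + 1 then Matrix.single (f i) (g i) (1:ℂ) else 1)
      = fun i => Matrix.single (f i) (g i) (1:ℂ) := funext fun i => if_pos i.isLt
  rw [kron_std f g, ← hc]
  exact h1

def Wsub (m : ℕ) : Submodule ℂ (Mat (m+1)) where
  carrier := {x | ∀ f g, f (Fin.last m) ≠ g (Fin.last m) → x f g = 0}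
  add_mem' := fun hx hy f g h => by
    simp only [Matrix.add_apply]; rw [hx f g h, hy f g h, add_zero]
  zero_mem' := fun f g h => rfl
  smul_mem' := fun c x hx f g h => by
    simp only [Matrix.smul_apply]; rw [hx f g h, smul_zero]

lemma mem_Wsub {m : ℕ} {x : Mat (m+1)} :
    x ∈ Wsub m ↔ ∀ f g, f (Fin.last m) ≠ g (Fin.last m) → x f g = 0 := Iff.rfl

lemma Wsub_mul {m : ℕ} {x z : Mat (m+1)} (hx : x ∈ Wsub m) (hz : z ∈ Wsub m) :
    x * z ∈ Wsub m := by
  intro f g h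
  rw [Matrix.mul_apply]
  refine Finset.sum_eq_zero fun q _ => ?_
  by_cases hq : q (Fin.last m) = g (Fin.last m)
  · rw [hx f q (fun he => h (he.trans hq)), zero_mul]
  · rw [hz q g hq, mul_zero]

lemma Wsub_star {m : ℕ} {x : Mat (m+1)} (hx : x ∈ Wsub m) : star x ∈ Wsub m := by
  intro f g h
  rw [Matrix.star_apply, hx g f (Ne.symm h), star_zero]

lemma Wsub_ternary (m : ℕ) :
    ∀ x ∈ Wsub m, ∀ y ∈ Wsub m, ∀ z ∈ Wsub m, x * star y * z ∈ Wsub m :=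
  fun _ hx _ hy _ hz => Wsub_mul (Wsub_mul hx (Wsub_star hy)) hz

lemma pauli1_offdiag : ∀ a b : Fin 2, a ≠ b → pauli1 a b = 0 := by
  intro a b h
  fin_cases a <;> fin_cases b <;> simp_all [pauli1]

lemma T_le_W (m : ℕ) : T m ≤ Wsub m := by
  refine troSpanA_le ?_ (Wsub_ternary m)
  intro x hx
  rcases hx with rfl | ⟨⟨l, b⟩, hp, rfl⟩
  · intro f g h
    exact Matrix.one_apply_ne (fun he => h (by rw [he]))
  · intro f g h
    simp only [spinS, kron, of_apply]
    apply Finset.prod_eq_zero (Finset.mem_univ (Fin.last m))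
    have hnl : ¬ (Fin.last m < l) := by
      rw [Fin.lt_def]
      have := l.isLt
      simp only [Fin.val_last]
      omega
    rw [if_neg hnl]
    by_cases hl : Fin.last m = l
    · rw [if_pos hl]
      have hlm : (l : ℕ) = m := by rw [← hl]; rfl
      cases b with
      | true =>
        exfalso
        simp only [Set.mem_setOf_eq, if_true] at hp
        norm_num at hp
        omega
      | false =>
        simpa using pauli1_offdiag _ _ h
    · rw [if_neg hl]
      exact Matrix.one_apply_ne h

lemma W_le_T (m : ℕ) : Wsub m ≤ T m := by
  intro x hx
  rw [matrix_eq_sum_single x]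
  refine Submodule.sum_mem _ fun f _ => Submodule.sum_mem _ fun g _ => ?_
  by_cases h : f (Fin.last m) = g (Fin.last m)
  · have he : Matrix.single f g (x f g) = x f g • Matrix.single f g (1:ℂ) := by
      rw [Matrix.smul_single, smul_eq_mul, mul_one]
    rw [he]
    exact Submodule.smul_mem _ _ (unit_mem f g h)
  · rw [hx f g h]
    simp

lemma T_eq_W (m : ℕ) : T m = Wsub m := le_antisymm (T_le_W m) (W_le_T m)

end SpinAux3

namespace SpinAux4
open SpinAux SpinAux2 SpinAux3

variable {m : ℕ}

def emb (m : ℕ) (i : Fin (2^m)) (a : Fin 2) : Fin (m+1) → Fin 2 :=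
  Fin.snoc (finFunctionFinEquiv.symm i) a

lemma emb_last (i : Fin (2^m)) (a : Fin 2) : emb m i a (Fin.last m) = a :=
  Fin.snoc_last _ _

lemma emb_init (i : Fin (2^m)) (a : Fin 2) :
    Fin.init (emb m i a) = finFunctionFinEquiv.symm i :=
  Fin.init_snoc _ _

def blk (a : Fin 2) : Mat (m+1) →ₗ[ℂ] Matrix (Fin (2^m)) (Fin (2^m)) ℂ where
  toFun x := Matrix.of fun i j => x (emb m i a) (emb m j a)
  map_add' x y := by ext i j; simp [Matrix.add_apply]
  map_smul' c x := by ext i j; simp [Matrix.smul_apply]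

lemma blk_apply (a : Fin 2) (x : Mat (m+1)) (i j : Fin (2^m)) :
    blk a x i j = x (emb m i a) (emb m j a) := rfl

def Psi (m : ℕ) : Mat (m+1) →ₗ[ℂ]
    (Matrix (Fin (2^m)) (Fin (2^m)) ℂ × Matrix (Fin (2^m)) (Fin (2^m)) ℂ) :=
  LinearMap.prod (blk 0) (blk 1)

def packEquiv (m : ℕ) : (Fin (2^m) × Fin 2) ≃ (Fin (m+1) → Fin 2) where
  toFun p := emb m p.1 p.2
  invFun f := (finFunctionFinEquiv (Fin.init f), f (Fin.last m))
  left_inv p := by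
    refine Prod.ext ?_ ?_ <;> simp [emb_init, emb_last]
  right_inv f := by
    simp only [emb, Equiv.symm_apply_apply]
    exact Fin.snoc_init_self f

lemma blk_mul {x z : Mat (m+1)} (hx : x ∈ Wsub m) (hz : z ∈ Wsub m) (a : Fin 2) :
    blk a (x * z) = blk a x * blk a z := by
  ext i j
  rw [blk_apply, Matrix.mul_apply, Matrix.mul_apply,
    ← Equiv.sum_comp (packEquiv m) (fun Q => x (emb m i a) Q * z Q (emb m j a)),
    Fintype.sum_prod_type]
  refine Finset.sum_congr rfl fun q _ => ?_
  rw [Fin.sum_univ_two]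
  have hpe : ∀ c : Fin 2, packEquiv m (q, c) = emb m q c := fun _ => rfl
  fin_cases a
  · simp only [Fin.zero_eta, Fin.mk_one]
    have hz1 : z (emb m q 1) (emb m j 0) = 0 := by
      refine hz _ _ ?_
      rw [emb_last, emb_last]
      decide
    rw [hpe 0, hpe 1, hz1, mul_zero, add_zero, blk_apply, blk_apply]
  · simp only [Fin.zero_eta, Fin.mk_one]
    have hz0 : z (emb m q 0) (emb m j 1) = 0 := by
      refine hz _ _ ?_
      rw [emb_last, emb_last]
      decide
    rw [hpe 0, hpe 1, hz0, mul_zero, zero_add, blk_apply, blk_apply]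

lemma blk_star (a : Fin 2) (y : Mat (m+1)) : blk a (star y) = star (blk a y) := by
  ext i j
  rw [blk_apply, Matrix.star_apply, Matrix.star_apply, blk_apply]

lemma Psi_ternary {x y z : Mat (m+1)} (hx : x ∈ Wsub m) (hy : y ∈ Wsub m)
    (hz : z ∈ Wsub m) :
    Psi m (x * star y * z) = Psi m x * star (Psi m y) * Psi m z := by
  have hxy : x * star y ∈ Wsub m := Wsub_mul hx (Wsub_star hy)
  refine Prod.ext ?_ ?_
  · show blk 0 (x * star y * z) = _
    rw [blk_mul hxy hz 0, blk_mul hx (Wsub_star hy) 0, blk_star]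
    rfl
  · show blk 1 (x * star y * z) = _
    rw [blk_mul hxy hz 1, blk_mul hx (Wsub_star hy) 1, blk_star]
    rfl

lemma Psi_inj {x : Mat (m+1)} (hx : x ∈ Wsub m) (h : Psi m x = 0) : x = 0 := by
  have hb : ∀ a : Fin 2, blk (m := m) a x = 0 := by
    intro a
    fin_cases a
    · exact congrArg Prod.fst h
    · exact congrArg Prod.snd h
  ext f g
  by_cases hfg : f (Fin.last m) = g (Fin.last m)
  · have h1 : emb m (finFunctionFinEquiv (Fin.init f)) (f (Fin.last m)) = f := by
      simp only [emb, Equiv.symm_apply_apply]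
      exact Fin.snoc_init_self f
    have h2 : emb m (finFunctionFinEquiv (Fin.init g)) (f (Fin.last m)) = g := by
      rw [hfg]
      simp only [emb, Equiv.symm_apply_apply]
      exact Fin.snoc_init_self g
    have h3 : x f g = blk (f (Fin.last m)) x (finFunctionFinEquiv (Fin.init f))
        (finFunctionFinEquiv (Fin.init g)) := by
      rw [blk_apply, h1, h2]
    rw [h3, hb (f (Fin.last m))]
    rfl
  · rw [hx f g hfg]
    rfl

lemma Psi_surj (A B : Matrix (Fin (2^m)) (Fin (2^m)) ℂ) :
    ∃ x ∈ Wsub m, Psi m x = (A, B) := by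
  refine ⟨Matrix.of (fun f g => if f (Fin.last m) = g (Fin.last m) then
      (if f (Fin.last m) = 0 then A else B) (finFunctionFinEquiv (Fin.init f))
        (finFunctionFinEquiv (Fin.init g)) else 0), fun f g h => if_neg h, ?_⟩
  refine Prod.ext ?_ ?_
  · ext i j
    show (if (emb m i 0) (Fin.last m) = (emb m j 0) (Fin.last m) then _ else _) = A i j
    rw [emb_last, emb_last, if_pos rfl, emb_init, emb_init]
    simp
  · ext i j
    show (if (emb m i 1) (Fin.last m) = (emb m j 1) (Fin.last m) then _ else _) = B i j
    rw [emb_last, emb_last, if_pos rfl, emb_init, emb_init]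
    simp

end SpinAux4


open SpinAux SpinAux2 SpinAux3 SpinAux4 in
/-- the TRO generated by the standard spin system `{1, s₁, …, s_{2n-1}}`
in `M_{2ⁿ}(ℂ)` is TRO-isomorphic to `M_{2^{n-1}}(ℂ) ⊕ M_{2^{n-1}}(ℂ)`. -/
theorem stmt_9 (n : ℕ) (hn : 1 ≤ n) :
    ∃ Φ : ↥(spinTRO n (2 * n - 1)) →ₗ[ℂ]
        Matrix (Fin (2 ^ (n - 1))) (Fin (2 ^ (n - 1))) ℂ ×
        Matrix (Fin (2 ^ (n - 1))) (Fin (2 ^ (n - 1))) ℂ,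
      Function.Bijective Φ ∧
      ∀ x y z w : ↥(spinTRO n (2 * n - 1)),
        (w : Matrix (Fin n → Fin 2) (Fin n → Fin 2) ℂ) =
          (x : Matrix (Fin n → Fin 2) (Fin n → Fin 2) ℂ) *
            star (y : Matrix (Fin n → Fin 2) (Fin n → Fin 2) ℂ) *
            (z : Matrix (Fin n → Fin 2) (Fin n → Fin 2) ℂ) →
        Φ w = Φ x * star (Φ y) * Φ z := by
  obtain ⟨m, rfl⟩ : ∃ m, n = m + 1 := ⟨n - 1, by omega⟩
  have hN : 2 * (m + 1) - 1 = 2 * m + 1 := by omega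
  rw [hN, Nat.add_sub_cancel]
  have hWmem : ∀ x : ↥(spinTRO (m+1) (2*m+1)), (x : Mat (m+1)) ∈ Wsub m :=
    fun x => T_le_W m x.2
  refine ⟨(Psi m).comp (Submodule.subtype _), ⟨?_, ?_⟩, ?_⟩
  · intro x y hxy
    apply Subtype.ext
    have hd : Psi m ((x : Mat (m+1)) - (y : Mat (m+1))) = 0 := by
      rw [map_sub]
      simpa using congrArg (fun t => t - (Psi m) (y : Mat (m+1))) hxy
    have := Psi_inj (Submodule.sub_mem _ (hWmem x) (hWmem y)) hd
    exact sub_eq_zero.mp this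
  · rintro ⟨A, B⟩
    obtain ⟨x, hxW, hx⟩ := Psi_surj A B
    exact ⟨⟨x, W_le_T m hxW⟩, hx⟩
  · intro x y z w hw
    simp only [LinearMap.comp_apply, Submodule.coe_subtype]
    rw [hw]
    exact Psi_ternary (hWmem x) (hWmem y) (hWmem z)
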